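/- Let k > 0 and C₁, C₂ ∈ [0,∞). Let α : ℝ → ℝ be differentiable and β : ℝ → ℝ be continuous and nonnegative, and assume that α'(t) + k·α(t) ≤ C₁·β(t) for every t ∈ ℝ, and that ∫_{t₀}^{t} β(s) ds ≤ C₂ for all t₀, t ∈ ℝ with t₀ ≤ t. Then for all t₀ ≤ t one has α(t) ≤ e^{−k(t−t₀)} α(t₀) + C₁C₂/(1 − e^{−k}). -/

import Mathlib

open MeasureTheory intervalIntegral

private lemma stmt11_aux_A (k : ℝ) (C₁ : ℝ)
    (α β : ℝ → ℝ) (hα : Differentiable ℝ α) (hβc : Continuous β)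
    (hineq : ∀ t : ℝ, deriv α t + k * α t ≤ C₁ * β t) :
    ∀ t₀ t : ℝ, t₀ ≤ t →
      Real.exp (k * t) * α t - Real.exp (k * t₀) * α t₀ ≤
        C₁ * ∫ s in t₀..t, Real.exp (k * s) * β s := by
  intro t₀ t ht
  have hgc : Continuous (fun s : ℝ => Real.exp (k * s) * β s) :=
    (Real.continuous_exp.comp (continuous_const.mul continuous_id)).mul hβc
  set F : ℝ → ℝ := fun u =>
    C₁ * (∫ s in t₀..u, Real.exp (k * s) * β s) - Real.exp (k * u) * α u with hF
  have hderiv : ∀ x : ℝ, HasDerivAt F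
      (C₁ * (Real.exp (k * x) * β x)
        - (Real.exp (k * x) * k * α x + Real.exp (k * x) * deriv α x)) x := by
    intro x
    have h1 : HasDerivAt (fun u => ∫ s in t₀..u, Real.exp (k * s) * β s)
        (Real.exp (k * x) * β x) x :=
      (hgc.integral_hasStrictDerivAt t₀ x).hasDerivAt
    have h2 : HasDerivAt (fun u : ℝ => Real.exp (k * u)) (Real.exp (k * x) * k) x := by
      simpa using ((hasDerivAt_id x).const_mul k).exp
    exact (h1.const_mul C₁).sub (h2.mul (hα x).hasDerivAt)
  have hmono : Monotone F := by
    apply monotone_of_deriv_nonneg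
    · intro x; exact ((hderiv x).differentiableAt)
    · intro x
      rw [(hderiv x).deriv]
      have h := hineq x
      have he : (0:ℝ) < Real.exp (k * x) := Real.exp_pos _
      nlinarith [he]
  have := hmono ht
  simp only [hF, intervalIntegral.integral_same, mul_zero, zero_sub] at this
  linarith

private lemma stmt11_aux_B (k : ℝ) (hk : 0 < k) (C₂ : ℝ) (hC₂ : 0 ≤ C₂)
    (β : ℝ → ℝ) (hβc : Continuous β) (hβ0 : ∀ t, 0 ≤ β t)
    (hint : ∀ t₀ t : ℝ, t₀ ≤ t → (∫ s in t₀..t, β s) ≤ C₂) :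
    ∀ n : ℕ, ∀ t₀ t : ℝ, t₀ ≤ t → t - t₀ ≤ n →
      (∫ s in t₀..t, Real.exp (k * s) * β s) ≤
        Real.exp (k * t) * C₂ * ∑ i ∈ Finset.range n, Real.exp (-k) ^ i := by
  have hgc : Continuous (fun s : ℝ => Real.exp (k * s) * β s) :=
    (Real.continuous_exp.comp (continuous_const.mul continuous_id)).mul hβc
  intro n
  induction n with
  | zero =>
    intro t₀ t ht hle
    have : t = t₀ := by push_cast at hle; linarith
    subst this
    simp
  | succ n ih =>
    intro t₀ t ht hle
    set c : ℝ := max t₀ (t - 1) with hc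
    have htc : t₀ ≤ c := le_max_left _ _
    have hct : c ≤ t := by
      apply max_le ht; linarith
    have hsplit : (∫ s in t₀..t, Real.exp (k * s) * β s) =
        (∫ s in t₀..c, Real.exp (k * s) * β s) + ∫ s in c..t, Real.exp (k * s) * β s := by
      rw [intervalIntegral.integral_add_adjacent_intervals (hgc.intervalIntegrable _ _)
        (hgc.intervalIntegrable _ _)]
    -- bound on the last piece
    have hlast : (∫ s in c..t, Real.exp (k * s) * β s) ≤ Real.exp (k * t) * C₂ := by
      have hmono : (∫ s in c..t, Real.exp (k * s) * β s) ≤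
          ∫ s in c..t, Real.exp (k * t) * β s := by
        apply intervalIntegral.integral_mono_on hct (hgc.intervalIntegrable _ _)
          ((continuous_const.mul hβc).intervalIntegrable _ _)
        intro s hs
        have hs2 : s ≤ t := hs.2
        have : Real.exp (k * s) ≤ Real.exp (k * t) := by
          apply Real.exp_le_exp.mpr; nlinarith
        exact mul_le_mul_of_nonneg_right this (hβ0 s)
      calc (∫ s in c..t, Real.exp (k * s) * β s) ≤ ∫ s in c..t, Real.exp (k * t) * β s := hmono
        _ = Real.exp (k * t) * ∫ s in c..t, β s := by
            rw [intervalIntegral.integral_const_mul]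
        _ ≤ Real.exp (k * t) * C₂ :=
            mul_le_mul_of_nonneg_left (hint c t hct) (Real.exp_pos _).le
    have hSnonneg : (0:ℝ) ≤ ∑ i ∈ Finset.range n, Real.exp (-k) ^ i :=
      Finset.sum_nonneg fun i _ => pow_nonneg (Real.exp_pos _).le i
    have hsum_succ : ∑ i ∈ Finset.range (n+1), Real.exp (-k) ^ i
        = 1 + Real.exp (-k) * ∑ i ∈ Finset.range n, Real.exp (-k) ^ i := by
      rw [geom_sum_succ]; ring
    rcases le_total t₀ (t - 1) with hcase | hcase
    · -- c = t - 1
      have hceq : c = t - 1 := max_eq_right hcase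
      have hih : (∫ s in t₀..c, Real.exp (k * s) * β s) ≤
          Real.exp (k * c) * C₂ * ∑ i ∈ Finset.range n, Real.exp (-k) ^ i := by
        apply ih t₀ c htc
        rw [hceq]; push_cast; push_cast at hle; linarith
      have hexpc : Real.exp (k * c) = Real.exp (k * t) * Real.exp (-k) := by
        rw [hceq, ← Real.exp_add]; ring_nf
      rw [hsplit, hsum_succ]
      rw [hexpc] at hih
      have he : (0:ℝ) < Real.exp (k * t) := Real.exp_pos _
      nlinarith [hih, hlast]
    · -- c = t₀
      have hceq : c = t₀ := max_eq_left hcase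
      rw [hsplit, hceq, intervalIntegral.integral_same, zero_add, hsum_succ]
      have he : (0:ℝ) < Real.exp (k * t) := Real.exp_pos _
      have hr : (0:ℝ) ≤ Real.exp (-k) := (Real.exp_pos _).le
      calc (∫ s in t₀..t, Real.exp (k * s) * β s) ≤ Real.exp (k * t) * C₂ := by
            rw [← hceq]; exact hlast
        _ ≤ Real.exp (k * t) * C₂ * (1 + Real.exp (-k) * ∑ i ∈ Finset.range n, Real.exp (-k) ^ i) := by
            nlinarith [mul_nonneg (mul_nonneg he.le hC₂) (mul_nonneg hr hSnonneg)]

/-- Gronwall-type decay estimate: if `α' (t) + k α(t) ≤ C₁ β(t)` for all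
`t`, with `k > 0`, `β` continuous and nonnegative, and `∫_{t₀}^{t} β ≤ C₂` for all
`t₀ ≤ t`, then `α(t) ≤ e^{−k(t−t₀)} α(t₀) + C₁ C₂ / (1 − e^{−k})` for all `t₀ ≤ t`. -/
theorem stmt11 (k : ℝ) (hk : 0 < k) (C₁ C₂ : ℝ) (hC₁ : 0 ≤ C₁) (hC₂ : 0 ≤ C₂)
    (α β : ℝ → ℝ) (hα : Differentiable ℝ α)
    (hβc : Continuous β) (hβ0 : ∀ t, 0 ≤ β t)
    (hineq : ∀ t : ℝ, deriv α t + k * α t ≤ C₁ * β t)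
    (hint : ∀ t₀ t : ℝ, t₀ ≤ t → (∫ s in t₀..t, β s) ≤ C₂) :
    ∀ t₀ t : ℝ, t₀ ≤ t →
      α t ≤ Real.exp (-k * (t - t₀)) * α t₀ + C₁ * C₂ / (1 - Real.exp (-k)) := by
  intro t₀ t ht
  have hA := stmt11_aux_A k C₁ α β hα hβc hineq t₀ t ht
  set n : ℕ := ⌈t - t₀⌉₊ with hn
  have hB := stmt11_aux_B k hk C₂ hC₂ β hβc hβ0 hint n t₀ t ht (Nat.le_ceil _)
  have hr1 : Real.exp (-k) < 1 := by
    rw [← Real.exp_zero]; exact Real.exp_lt_exp.mpr (by linarith)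
  have hr0 : (0:ℝ) < Real.exp (-k) := Real.exp_pos _
  have hS : (∑ i ∈ Finset.range n, Real.exp (-k) ^ i) ≤ 1 / (1 - Real.exp (-k)) := by
    have hne : Real.exp (-k) ≠ 1 := ne_of_lt hr1
    have h1 : (0:ℝ) < 1 - Real.exp (-k) := by linarith
    have heq : (Real.exp (-k) ^ n - 1) / (Real.exp (-k) - 1)
        = (1 - Real.exp (-k) ^ n) / (1 - Real.exp (-k)) := by
      rw [← neg_div_neg_eq]; ring_nf
    rw [geom_sum_eq hne, heq, div_le_div_iff₀ h1 h1]
    have hpow : (0:ℝ) ≤ Real.exp (-k) ^ n := pow_nonneg hr0.le n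
    nlinarith
  have hInt : (∫ s in t₀..t, Real.exp (k * s) * β s) ≤
      Real.exp (k * t) * (C₂ / (1 - Real.exp (-k))) := by
    calc (∫ s in t₀..t, Real.exp (k * s) * β s) ≤
        Real.exp (k * t) * C₂ * ∑ i ∈ Finset.range n, Real.exp (-k) ^ i := hB
      _ ≤ Real.exp (k * t) * C₂ * (1 / (1 - Real.exp (-k))) := by
          apply mul_le_mul_of_nonneg_left hS
          positivity
      _ = Real.exp (k * t) * (C₂ / (1 - Real.exp (-k))) := by ring
  have het : (0:ℝ) < Real.exp (k * t) := Real.exp_pos _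
  have key : Real.exp (k * t) * α t ≤
      Real.exp (k * t₀) * α t₀ + C₁ * (Real.exp (k * t) * (C₂ / (1 - Real.exp (-k)))) := by
    have := mul_le_mul_of_nonneg_left hInt hC₁
    linarith
  have hid : Real.exp (k * t) * Real.exp (-k * (t - t₀)) = Real.exp (k * t₀) := by
    rw [← Real.exp_add]; ring_nf
  have hmain : Real.exp (k * t) * α t ≤
      Real.exp (k * t) * (Real.exp (-k * (t - t₀)) * α t₀ + C₁ * C₂ / (1 - Real.exp (-k))) := by
    have : Real.exp (k * t) * (Real.exp (-k * (t - t₀)) * α t₀ + C₁ * C₂ / (1 - Real.exp (-k)))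
        = Real.exp (k * t₀) * α t₀ + C₁ * (Real.exp (k * t) * (C₂ / (1 - Real.exp (-k)))) := by
      rw [mul_add, ← mul_assoc, hid]; ring
    rw [this]; exact key
  exact (mul_le_mul_iff_right₀ het).mp hmain
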